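/- Let K be a convex polygon whose sides lie on lines L₁,...,Lₙ with K on one side of each, and suppose K has a reflection symmetry across a line ℓ (the reflection maps K to K and permutes the lines Lᵢ). Then either V(p) = Σ dist(p, Lᵢ) is constant on K, or V, being affine with V(p) = v·p + c for some nonzero v, has v parallel to ℓ (so the level sets of V are perpendicular to ℓ). -/

import Mathlib

open Metric
open scoped InnerProductSpace

noncomputable section

abbrev E2 := EuclideanSpace ℝ (Fin 2)

/-- The line `{q : αᵢ·q + γᵢ = 0}` in ℝ². -/
def line2 (a : E2) (γ : ℝ) : Set E2 := {q : E2 | ⟪a, q⟫_ℝ + γ = 0}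

/-- The sum of the distances from `p` to the lines `Lᵢ`. -/
def sumDist {n : ℕ} (a : Fin n → E2) (γ : Fin n → ℝ) (p : E2) : ℝ :=
  ∑ i, infDist p (line2 (a i) (γ i))

/-- Suppose the convex body `K` (with nonempty interior) lies on one side of each of
the lines `Lᵢ`, and `K` has a reflection symmetry across the line `ℓ` through `u` and
`w`: the isometry `g` fixes `ℓ` pointwise, is not the identity, maps `K` onto itself and
permutes the lines `Lᵢ`. Then either `V(p) = Σ dist(p, Lᵢ)` is constant on `K`, or in
any affine representation `V(p) = v·p + c` on `K` with `v ≠ 0`, the vector `v` is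
parallel to `ℓ` (so the isosum level sets are perpendicular to `ℓ`). -/
theorem sum_dist_reflection_symmetry {n : ℕ} (a : Fin n → E2) (γ : Fin n → ℝ)
    (ha : ∀ i, a i ≠ 0) (K : Set E2) (hK : Convex ℝ K)
    (hKint : (interior K).Nonempty)
    (hside : ∀ i, ∀ p ∈ K, 0 ≤ ⟪a i, p⟫_ℝ + γ i)
    (u w : E2) (huw : u ≠ w)
    (g : E2 ≃ᵢ E2)
    (hfix : ∀ q ∈ (affineSpan ℝ {u, w} : Set E2), g q = q)
    (hgne : ∃ q : E2, g q ≠ q)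
    (hgK : g '' K = K)
    (σ : Equiv.Perm (Fin n))
    (hgL : ∀ i, g '' line2 (a i) (γ i) = line2 (a (σ i)) (γ (σ i))) :
    (∀ p ∈ K, ∀ q ∈ K, sumDist a γ p = sumDist a γ q) ∨
      (∀ v : E2, ∀ c : ℝ, v ≠ 0 →
        (∀ p ∈ K, sumDist a γ p = ⟪v, p⟫_ℝ + c) →
        ∃ t : ℝ, v = t • (w - u)) := by
  right
  intro v c hv hvc
  by_contra hcon
  push_neg at hcon
  -- the affine structure of g
  set f := g.toRealAffineIsometryEquiv with hfdef
  have hfg : ∀ p, f p = g p := fun p => rfl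
  set L := f.linearIsometryEquiv with hLdef
  have hu : g u = u := hfix u (subset_affineSpan ℝ _ (by simp))
  have hw : g w = w := hfix w (subset_affineSpan ℝ _ (by simp))
  have hrep : ∀ p : E2, g p = L (p - u) + u := by
    intro p
    have : f ((p - u) +ᵥ u) = L (p - u) +ᵥ f u := f.map_vadd u (p - u)
    simpa [hfg, hu] using this
  have hLd : L (w - u) = w - u := by
    have h := hrep w
    rw [hw] at h
    exact (sub_eq_iff_eq_add.mpr h).symm
  -- invariance of sumDist under g
  have hinv : ∀ p : E2, sumDist a γ (g p) = sumDist a γ p := by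
    intro p
    unfold sumDist
    have h1 : ∀ i, infDist (g p) (line2 (a (σ i)) (γ (σ i))) = infDist p (line2 (a i) (γ i)) := by
      intro i
      rw [← hgL i, infDist_image g.isometry]
    calc ∑ i, infDist (g p) (line2 (a i) (γ i))
        = ∑ i, infDist (g p) (line2 (a (σ i)) (γ (σ i))) :=
          (Equiv.sum_comp σ fun i => infDist (g p) (line2 (a i) (γ i))).symm
      _ = ∑ i, infDist p (line2 (a i) (γ i)) := by simp [h1]
  -- inner product invariance on K
  have hKg : ∀ p ∈ K, g p ∈ K := by
    intro p hp
    rw [← hgK]; exact Set.mem_image_of_mem _ hp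
  have hKin : ∀ p ∈ K, ⟪v, g p⟫_ℝ = ⟪v, p⟫_ℝ := by
    intro p hp
    have h1 := hvc p hp
    have h2 := hvc (g p) (hKg p hp)
    rw [hinv p, h1] at h2
    linarith
  -- the linear functional T x = ⟪v, L x⟫ - ⟪v, x⟫ vanishes on K - u
  obtain ⟨x₀, hx₀⟩ := hKint
  obtain ⟨r, hr, hball⟩ := Metric.isOpen_iff.1 isOpen_interior x₀ hx₀
  have hTK : ∀ p ∈ K, ⟪v, L (p - u)⟫_ℝ = ⟪v, p - u⟫_ℝ := by
    intro p hp
    have := hKin p hp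
    rw [hrep p] at this
    rw [inner_sub_right]
    rw [inner_add_right] at this
    linarith [inner_sub_right (𝕜 := ℝ) v p u]
  -- extend to all of E2
  have hTall : ∀ x : E2, ⟪v, L x⟫_ℝ = ⟪v, x⟫_ℝ := by
    intro x
    set ε : ℝ := r / (2 * (‖x‖ + 1)) with hε
    have hxpos : (0:ℝ) < ‖x‖ + 1 := by positivity
    have hεpos : 0 < ε := by positivity
    have hmem : x₀ + ε • x ∈ K := by
      apply interior_subset
      apply hball
      rw [Metric.mem_ball, dist_eq_norm]
      have : ‖x₀ + ε • x - x₀‖ = ε * ‖x‖ := by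
        rw [add_sub_cancel_left, norm_smul, Real.norm_eq_abs, abs_of_pos hεpos]
      rw [this, hε]
      calc r / (2 * (‖x‖ + 1)) * ‖x‖ ≤ r / (2 * (‖x‖ + 1)) * (‖x‖ + 1) := by
            apply mul_le_mul_of_nonneg_left (by linarith) (le_of_lt hεpos)
        _ = r / 2 := by field_simp
        _ < r := by linarith
    have h0 : x₀ ∈ K := interior_subset hx₀
    have e1 := hTK _ hmem
    have e2 := hTK _ h0
    have key : (x₀ + ε • x) - u = (x₀ - u) + ε • x := by module
    rw [key] at e1
    rw [map_add, map_smul, inner_add_right, inner_add_right, inner_smul_right,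
      inner_smul_right] at e1
    have : ε * ⟪v, L x⟫_ℝ = ε * ⟪v, x⟫_ℝ := by linarith
    exact mul_left_cancel₀ (ne_of_gt hεpos) this
  -- hence L v = v
  have hLv : L v = v := by
    have h1 : ∀ x : E2, ⟪L.symm v - v, x⟫_ℝ = 0 := by
      intro x
      have e := L.inner_map_map (L.symm v) x
      rw [L.apply_symm_apply] at e
      rw [inner_sub_left, ← e, hTall x, sub_self]
    have h2 : L.symm v - v = 0 := by
      have := h1 (L.symm v - v)
      rwa [inner_self_eq_zero] at this
    have h3 : L.symm v = v := sub_eq_zero.1 h2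
    have h4 := congrArg L h3
    rw [L.apply_symm_apply] at h4
    exact h4.symm
  -- v and w - u are linearly independent, so L = id : contradiction
  obtain ⟨q, hq⟩ := hgne
  have hd : w - u ≠ 0 := sub_ne_zero.2 (Ne.symm huw)
  have hindep : LinearIndependent ℝ ![w - u, v] := by
    rw [LinearIndependent.pair_iff']
    · intro t
      exact fun h => hcon t (by rw [h])
    · exact hd
  have hspan : Submodule.span ℝ (Set.range ![w - u, v]) = ⊤ := by
    apply LinearIndependent.span_eq_top_of_card_eq_finrank hindep
    simp
  have hLid : ∀ x : E2, L x = x := by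
    intro x
    have hx : x ∈ Submodule.span ℝ (Set.range ![w - u, v]) := by rw [hspan]; trivial
    induction hx using Submodule.span_induction with
    | mem y hy =>
      obtain ⟨i, rfl⟩ := hy
      fin_cases i
      · exact hLd
      · exact hLv
    | zero => simp
    | add y z _ _ hy hz => rw [map_add, hy, hz]
    | smul t y _ hy => rw [map_smul, hy]
  apply hq
  rw [hrep q, hLid]
  abel
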